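/- Every satisfiable flat CTL formula φ (temporal depth at most 1, arbitrary CTL operators, standard Boolean base) has a serial model of extent O(|φ|) and size O(|φ|²). Concretely, a satisfiable conjunction ⋀_{i=1}^m Eψᵢ ∧ ⋀_{j=1}^k Aξⱼ with all ψᵢ, ξⱼ of temporal depth ≤ 1 has a model consisting of a root with m branches, each a path of at most k + 2 worlds ending in a self-loop. -/

import Mathlib

def Serial {W : Type} (R : W → W → Prop) : Prop := ∀ w, ∃ u, R w u

def IsPath {W : Type} (R : W → W → Prop) (π : ℕ → W) : Prop := ∀ i, R (π i) (π (i+1))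

structure Kripke (W : Type) where
  R : W → W → Prop
  V : ℕ → W → Prop

inductive CTL where
  | atom : ℕ → CTL
  | neg  : CTL → CTL
  | and  : CTL → CTL → CTL
  | or   : CTL → CTL → CTL
  | AX : CTL → CTL
  | EX : CTL → CTL
  | AF : CTL → CTL
  | EF : CTL → CTL
  | AG : CTL → CTL
  | EG : CTL → CTL
  | AU : CTL → CTL → CTL
  | EU : CTL → CTL → CTL
  | AR : CTL → CTL → CTL
  | ER : CTL → CTL → CTL
deriving DecidableEq

def sat {W : Type} (K : Kripke W) : CTL → W → Prop
  | .atom p, w => K.V p w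
  | .neg φ, w => ¬ sat K φ w
  | .and φ ψ, w => sat K φ w ∧ sat K ψ w
  | .or φ ψ, w => sat K φ w ∨ sat K ψ w
  | .AX φ, w => ∀ π : ℕ → W, IsPath K.R π → π 0 = w → sat K φ (π 1)
  | .EX φ, w => ∃ π : ℕ → W, IsPath K.R π ∧ π 0 = w ∧ sat K φ (π 1)
  | .AF φ, w => ∀ π : ℕ → W, IsPath K.R π → π 0 = w → ∃ i, sat K φ (π i)
  | .EF φ, w => ∃ π : ℕ → W, IsPath K.R π ∧ π 0 = w ∧ ∃ i, sat K φ (π i)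
  | .AG φ, w => ∀ π : ℕ → W, IsPath K.R π → π 0 = w → ∀ i, sat K φ (π i)
  | .EG φ, w => ∃ π : ℕ → W, IsPath K.R π ∧ π 0 = w ∧ ∀ i, sat K φ (π i)
  | .AU φ ψ, w => ∀ π : ℕ → W, IsPath K.R π → π 0 = w →
      ∃ i, sat K ψ (π i) ∧ ∀ j, j < i → sat K φ (π j)
  | .EU φ ψ, w => ∃ π : ℕ → W, IsPath K.R π ∧ π 0 = w ∧
      ∃ i, sat K ψ (π i) ∧ ∀ j, j < i → sat K φ (π j)
  | .AR φ ψ, w => ∀ π : ℕ → W, IsPath K.R π → π 0 = w →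
      ∀ i, sat K ψ (π i) ∨ ∃ j, j < i ∧ sat K φ (π j)
  | .ER φ ψ, w => ∃ π : ℕ → W, IsPath K.R π ∧ π 0 = w ∧
      ∀ i, sat K ψ (π i) ∨ ∃ j, j < i ∧ sat K φ (π j)

def CTL.len : CTL → ℕ
  | .atom _ => 1
  | .neg φ => φ.len + 1
  | .and φ ψ => φ.len + ψ.len + 1
  | .or φ ψ => φ.len + ψ.len + 1
  | .AX φ => φ.len + 1
  | .EX φ => φ.len + 1
  | .AF φ => φ.len + 1
  | .EF φ => φ.len + 1
  | .AG φ => φ.len + 1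
  | .EG φ => φ.len + 1
  | .AU φ ψ => φ.len + ψ.len + 1
  | .EU φ ψ => φ.len + ψ.len + 1
  | .AR φ ψ => φ.len + ψ.len + 1
  | .ER φ ψ => φ.len + ψ.len + 1

def CTL.td : CTL → ℕ
  | .atom _ => 0
  | .neg φ => φ.td
  | .and φ ψ => max φ.td ψ.td
  | .or φ ψ => max φ.td ψ.td
  | .AX φ => φ.td + 1
  | .EX φ => φ.td + 1
  | .AF φ => φ.td + 1
  | .EF φ => φ.td + 1
  | .AG φ => φ.td + 1
  | .EG φ => φ.td + 1
  | .AU φ ψ => max φ.td ψ.td + 1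
  | .EU φ ψ => max φ.td ψ.td + 1
  | .AR φ ψ => max φ.td ψ.td + 1
  | .ER φ ψ => max φ.td ψ.td + 1

section FlatCTL
open Classical

noncomputable section

def evalProp (v : ℕ → Prop) : CTL → Prop
  | .atom p => v p
  | .neg φ => ¬ evalProp v φ
  | .and φ ψ => evalProp v φ ∧ evalProp v ψ
  | .or φ ψ => evalProp v φ ∨ evalProp v ψ
  | _ => True

def pathHolds (t : ℕ → ℕ → Prop) : CTL → Prop
  | .AX φ => evalProp (t 1) φ
  | .EX φ => evalProp (t 1) φ
  | .AF φ => ∃ i, evalProp (t i) φ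
  | .EF φ => ∃ i, evalProp (t i) φ
  | .AG φ => ∀ i, evalProp (t i) φ
  | .EG φ => ∀ i, evalProp (t i) φ
  | .AU φ ψ => ∃ i, evalProp (t i) ψ ∧ ∀ j, j < i → evalProp (t j) φ
  | .EU φ ψ => ∃ i, evalProp (t i) ψ ∧ ∀ j, j < i → evalProp (t j) φ
  | .AR φ ψ => ∀ i, evalProp (t i) ψ ∨ ∃ j, j < i ∧ evalProp (t j) φ
  | .ER φ ψ => ∀ i, evalProp (t i) ψ ∨ ∃ j, j < i ∧ evalProp (t j) φ
  | _ => True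

def rootSat (v : ℕ → Prop) (T : Set (ℕ → ℕ → Prop)) : CTL → Prop
  | .atom p => v p
  | .neg φ => ¬ rootSat v T φ
  | .and φ ψ => rootSat v T φ ∧ rootSat v T ψ
  | .or φ ψ => rootSat v T φ ∨ rootSat v T ψ
  | .AX φ => ∀ t ∈ T, pathHolds t (.AX φ)
  | .EX φ => ∃ t ∈ T, pathHolds t (.EX φ)
  | .AF φ => ∀ t ∈ T, pathHolds t (.AF φ)
  | .EF φ => ∃ t ∈ T, pathHolds t (.EF φ)
  | .AG φ => ∀ t ∈ T, pathHolds t (.AG φ)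
  | .EG φ => ∃ t ∈ T, pathHolds t (.EG φ)
  | .AU φ ψ => ∀ t ∈ T, pathHolds t (.AU φ ψ)
  | .EU φ ψ => ∃ t ∈ T, pathHolds t (.EU φ ψ)
  | .AR φ ψ => ∀ t ∈ T, pathHolds t (.AR φ ψ)
  | .ER φ ψ => ∃ t ∈ T, pathHolds t (.ER φ ψ)

def tops : CTL → List CTL
  | .atom _ => []
  | .neg φ => tops φ
  | .and φ ψ => tops φ ++ tops ψ
  | .or φ ψ => tops φ ++ tops ψ
  | c => [c]

def trOf {W : Type} (K : Kripke W) (π : ℕ → W) : ℕ → ℕ → Prop := fun i p => K.V p (π i)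

def Traces {W : Type} (K : Kripke W) (w : W) : Set (ℕ → ℕ → Prop) :=
  {t | ∃ π, IsPath K.R π ∧ π 0 = w ∧ t = trOf K π}

lemma one_le_len (φ : CTL) : 1 ≤ φ.len := by
  induction φ <;> simp [CTL.len] <;> omega

lemma tops_length_le (φ : CTL) : (tops φ).length ≤ φ.len := by
  induction φ <;> simp_all [tops, CTL.len] <;> omega

lemma sat_prop {W : Type} (K : Kripke W) (φ : CTL) (h : φ.td = 0) (w : W) :
    sat K φ w ↔ evalProp (fun p => K.V p w) φ := by
  induction φ with
  | atom p => exact Iff.rfl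
  | neg φ ih => simp only [sat, evalProp]; rw [ih h]
  | and φ ψ ihφ ihψ =>
      simp only [CTL.td, Nat.max_eq_zero_iff] at h
      simp only [sat, evalProp]; rw [ihφ h.1, ihψ h.2]
  | or φ ψ ihφ ihψ =>
      simp only [CTL.td, Nat.max_eq_zero_iff] at h
      simp only [sat, evalProp]; rw [ihφ h.1, ihψ h.2]
  | _ => simp [CTL.td] at h
lemma sat_iff_rootSat {W : Type} (K : Kripke W) (w : W) :
    ∀ φ : CTL, φ.td ≤ 1 → (sat K φ w ↔ rootSat (fun p => K.V p w) (Traces K w) φ) := by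
  intro φ
  induction φ with
  | atom p => intro _; exact Iff.rfl
  | neg φ ih =>
      intro h
      simp only [CTL.td] at h
      simp only [sat, rootSat]; rw [ih h]
  | and φ ψ ihφ ihψ =>
      intro h
      simp only [CTL.td, max_le_iff] at h
      simp only [sat, rootSat]; rw [ihφ h.1, ihψ h.2]
  | or φ ψ ihφ ihψ =>
      intro h
      simp only [CTL.td, max_le_iff] at h
      simp only [sat, rootSat]; rw [ihφ h.1, ihψ h.2]
  | AX ψ _ =>
      intro h
      have hψ : ψ.td = 0 := by simp only [CTL.td] at h; omega
      simp only [sat, rootSat]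
      constructor
      · rintro hs t ⟨π, hπ, h0, rfl⟩
        exact (sat_prop K ψ hψ (π 1)).1 (hs π hπ h0)
      · intro hs π hπ h0
        exact (sat_prop K ψ hψ (π 1)).2 (hs (trOf K π) ⟨π, hπ, h0, rfl⟩)
  | EX ψ _ =>
      intro h
      have hψ : ψ.td = 0 := by simp only [CTL.td] at h; omega
      simp only [sat, rootSat]
      constructor
      · rintro ⟨π, hπ, h0, hs⟩
        exact ⟨trOf K π, ⟨π, hπ, h0, rfl⟩, (sat_prop K ψ hψ (π 1)).1 hs⟩
      · rintro ⟨t, ⟨π, hπ, h0, rfl⟩, ht⟩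
        exact ⟨π, hπ, h0, (sat_prop K ψ hψ (π 1)).2 ht⟩
  | AF ψ _ =>
      intro h
      have hψ : ψ.td = 0 := by simp only [CTL.td] at h; omega
      simp only [sat, rootSat]
      constructor
      · rintro hs t ⟨π, hπ, h0, rfl⟩
        obtain ⟨i, hi⟩ := hs π hπ h0
        exact ⟨i, (sat_prop K ψ hψ (π i)).1 hi⟩
      · intro hs π hπ h0
        obtain ⟨i, hi⟩ := hs (trOf K π) ⟨π, hπ, h0, rfl⟩
        exact ⟨i, (sat_prop K ψ hψ (π i)).2 hi⟩
  | EF ψ _ =>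
      intro h
      have hψ : ψ.td = 0 := by simp only [CTL.td] at h; omega
      simp only [sat, rootSat]
      constructor
      · rintro ⟨π, hπ, h0, i, hi⟩
        exact ⟨trOf K π, ⟨π, hπ, h0, rfl⟩, i, (sat_prop K ψ hψ (π i)).1 hi⟩
      · rintro ⟨t, ⟨π, hπ, h0, rfl⟩, i, hi⟩
        exact ⟨π, hπ, h0, i, (sat_prop K ψ hψ (π i)).2 hi⟩
  | AG ψ _ =>
      intro h
      have hψ : ψ.td = 0 := by simp only [CTL.td] at h; omega
      simp only [sat, rootSat]
      constructor
      · rintro hs t ⟨π, hπ, h0, rfl⟩ i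
        exact (sat_prop K ψ hψ (π i)).1 (hs π hπ h0 i)
      · intro hs π hπ h0 i
        exact (sat_prop K ψ hψ (π i)).2 (hs (trOf K π) ⟨π, hπ, h0, rfl⟩ i)
  | EG ψ _ =>
      intro h
      have hψ : ψ.td = 0 := by simp only [CTL.td] at h; omega
      simp only [sat, rootSat]
      constructor
      · rintro ⟨π, hπ, h0, hs⟩
        exact ⟨trOf K π, ⟨π, hπ, h0, rfl⟩, fun i => (sat_prop K ψ hψ (π i)).1 (hs i)⟩
      · rintro ⟨t, ⟨π, hπ, h0, rfl⟩, ht⟩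
        exact ⟨π, hπ, h0, fun i => (sat_prop K ψ hψ (π i)).2 (ht i)⟩
  | AU χ ψ _ _ =>
      intro h
      have h' : χ.td = 0 ∧ ψ.td = 0 := by simp only [CTL.td, max_le_iff] at h; omega
      simp only [sat, rootSat]
      constructor
      · rintro hs t ⟨π, hπ, h0, rfl⟩
        obtain ⟨i, hi, hj⟩ := hs π hπ h0
        exact ⟨i, (sat_prop K ψ h'.2 (π i)).1 hi,
          fun j hjlt => (sat_prop K χ h'.1 (π j)).1 (hj j hjlt)⟩
      · intro hs π hπ h0
        obtain ⟨i, hi, hj⟩ := hs (trOf K π) ⟨π, hπ, h0, rfl⟩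
        exact ⟨i, (sat_prop K ψ h'.2 (π i)).2 hi,
          fun j hjlt => (sat_prop K χ h'.1 (π j)).2 (hj j hjlt)⟩
  | EU χ ψ _ _ =>
      intro h
      have h' : χ.td = 0 ∧ ψ.td = 0 := by simp only [CTL.td, max_le_iff] at h; omega
      simp only [sat, rootSat]
      constructor
      · rintro ⟨π, hπ, h0, i, hi, hj⟩
        exact ⟨trOf K π, ⟨π, hπ, h0, rfl⟩, i, (sat_prop K ψ h'.2 (π i)).1 hi,
          fun j hjlt => (sat_prop K χ h'.1 (π j)).1 (hj j hjlt)⟩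
      · rintro ⟨t, ⟨π, hπ, h0, rfl⟩, i, hi, hj⟩
        exact ⟨π, hπ, h0, i, (sat_prop K ψ h'.2 (π i)).2 hi,
          fun j hjlt => (sat_prop K χ h'.1 (π j)).2 (hj j hjlt)⟩
  | AR χ ψ _ _ =>
      intro h
      have h' : χ.td = 0 ∧ ψ.td = 0 := by simp only [CTL.td, max_le_iff] at h; omega
      simp only [sat, rootSat]
      constructor
      · rintro hs t ⟨π, hπ, h0, rfl⟩ i
        rcases hs π hπ h0 i with hψ | ⟨j, hj, hχ⟩
        · exact Or.inl ((sat_prop K ψ h'.2 (π i)).1 hψ)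
        · exact Or.inr ⟨j, hj, (sat_prop K χ h'.1 (π j)).1 hχ⟩
      · intro hs π hπ h0 i
        rcases hs (trOf K π) ⟨π, hπ, h0, rfl⟩ i with hψ | ⟨j, hj, hχ⟩
        · exact Or.inl ((sat_prop K ψ h'.2 (π i)).2 hψ)
        · exact Or.inr ⟨j, hj, (sat_prop K χ h'.1 (π j)).2 hχ⟩
  | ER χ ψ _ _ =>
      intro h
      have h' : χ.td = 0 ∧ ψ.td = 0 := by simp only [CTL.td, max_le_iff] at h; omega
      simp only [sat, rootSat]
      constructor
      · rintro ⟨π, hπ, h0, hs⟩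
        refine ⟨trOf K π, ⟨π, hπ, h0, rfl⟩, fun i => ?_⟩
        rcases hs i with hψ | ⟨j, hj, hχ⟩
        · exact Or.inl ((sat_prop K ψ h'.2 (π i)).1 hψ)
        · exact Or.inr ⟨j, hj, (sat_prop K χ h'.1 (π j)).1 hχ⟩
      · rintro ⟨t, ⟨π, hπ, h0, rfl⟩, ht⟩
        refine ⟨π, hπ, h0, fun i => ?_⟩
        rcases ht i with hψ | ⟨j, hj, hχ⟩
        · exact Or.inl ((sat_prop K ψ h'.2 (π i)).2 hψ)
        · exact Or.inr ⟨j, hj, (sat_prop K χ h'.1 (π j)).2 hχ⟩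
lemma rootSat_iff (v : ℕ → Prop) (T T' : Set (ℕ → ℕ → Prop)) :
    ∀ φ : CTL,
    (∀ c ∈ tops φ, ((∃ t ∈ T, pathHolds t c) ↔ (∃ t ∈ T', pathHolds t c))) →
    (∀ c ∈ tops φ, ((∀ t ∈ T, pathHolds t c) ↔ (∀ t ∈ T', pathHolds t c))) →
    (rootSat v T φ ↔ rootSat v T' φ) := by
  intro φ
  induction φ with
  | atom p => intro _ _; exact Iff.rfl
  | neg φ ih =>
      intro hE hA
      simp only [tops] at hE hA
      simp only [rootSat]; rw [ih hE hA]
  | and φ ψ ihφ ihψ =>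
      intro hE hA
      simp only [tops, List.mem_append] at hE hA
      simp only [rootSat]
      rw [ihφ (fun c hc => hE c (Or.inl hc)) (fun c hc => hA c (Or.inl hc)),
        ihψ (fun c hc => hE c (Or.inr hc)) (fun c hc => hA c (Or.inr hc))]
  | or φ ψ ihφ ihψ =>
      intro hE hA
      simp only [tops, List.mem_append] at hE hA
      simp only [rootSat]
      rw [ihφ (fun c hc => hE c (Or.inl hc)) (fun c hc => hA c (Or.inl hc)),
        ihψ (fun c hc => hE c (Or.inr hc)) (fun c hc => hA c (Or.inr hc))]
  | AX ψ _ => intro _ hA; exact hA _ (by simp [tops])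
  | EX ψ _ => intro hE _; exact hE _ (by simp [tops])
  | AF ψ _ => intro _ hA; exact hA _ (by simp [tops])
  | EF ψ _ => intro hE _; exact hE _ (by simp [tops])
  | AG ψ _ => intro _ hA; exact hA _ (by simp [tops])
  | EG ψ _ => intro hE _; exact hE _ (by simp [tops])
  | AU χ ψ _ _ => intro _ hA; exact hA _ (by simp [tops])
  | EU χ ψ _ _ => intro hE _; exact hE _ (by simp [tops])
  | AR χ ψ _ _ => intro _ hA; exact hA _ (by simp [tops])
  | ER χ ψ _ _ => intro hE _; exact hE _ (by simp [tops])
-- Witness sets for path conditions over a position predicate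
def witF (P : ℕ → Prop) : Finset ℕ :=
  if h : ∃ i, P i then {Nat.find h} else ∅
def witG (P : ℕ → Prop) : Finset ℕ :=
  if h : ∃ i, ¬ P i then {Nat.find h} else ∅
def witU (P Q : ℕ → Prop) : Finset ℕ :=
  if h : ∃ i, Q i ∧ ∀ j, j < i → P j then {Nat.find h}
  else if h2 : ∃ j, ¬ P j then {Nat.find h2} else ∅
def witR (P Q : ℕ → Prop) : Finset ℕ :=
  if h : ∃ i, ¬ Q i ∧ ∀ j, j < i → ¬ P j then {Nat.find h}
  else if h2 : ∃ j, P j then {Nat.find h2} else ∅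

lemma witF_card (P : ℕ → Prop) : (witF P).card ≤ 1 := by
  unfold witF; split <;> simp
lemma witG_card (P : ℕ → Prop) : (witG P).card ≤ 1 := by
  unfold witG; split <;> simp
lemma witU_card (P Q : ℕ → Prop) : (witU P Q).card ≤ 1 := by
  unfold witU; split
  · simp
  · split <;> simp
lemma witR_card (P Q : ℕ → Prop) : (witR P Q).card ≤ 1 := by
  unfold witR; split
  · simp
  · split <;> simp

section Sigma
variable (σ : ℕ → ℕ) (N : ℕ)
variable (hσ1 : σ 1 = 1)
  (hmono : StrictMonoOn σ (Set.Iic N))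
  (hconst : ∀ k, σ k = σ (min k N))

include hmono hconst in
lemma sigma_reflect {k0 k : ℕ} (hk0 : k0 ≤ N) (h : σ k0 < σ k) : k0 < k := by
  by_contra hn
  push_neg at hn
  have h1 : σ (min k N) ≤ σ k0 :=
    hmono.monotoneOn (by simp) (by simpa using hk0) (by omega)
  rw [hconst k] at h
  omega

lemma presF (P : ℕ → Prop) (hsub : ∀ x ∈ witF P, ∃ k ≤ N, σ k = x) :
    (∃ i, P (σ i)) ↔ ∃ i, P i := by
  constructor
  · rintro ⟨i, hi⟩; exact ⟨σ i, hi⟩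
  · intro h
    obtain ⟨k, _, hk⟩ := hsub (Nat.find h) (by simp [witF, dif_pos h])
    exact ⟨k, by rw [hk]; exact Nat.find_spec h⟩

lemma presG (P : ℕ → Prop) (hsub : ∀ x ∈ witG P, ∃ k ≤ N, σ k = x) :
    (∀ i, P (σ i)) ↔ ∀ i, P i := by
  constructor
  · intro hall
    by_contra hn
    push_neg at hn
    obtain ⟨k, _, hk⟩ := hsub (Nat.find hn) (by simp [witG, dif_pos hn])
    have hnp : ¬ P (σ k) := by rw [hk]; exact Nat.find_spec hn
    exact hnp (hall k)
  · intro h i; exact h (σ i)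

include hσ1 hmono hconst in
lemma presU (P Q : ℕ → Prop) (hsub : ∀ x ∈ witU P Q, ∃ k ≤ N, σ k = x) :
    (∃ i, Q (σ i) ∧ ∀ j, j < i → P (σ j)) ↔ (∃ i, Q i ∧ ∀ j, j < i → P j) := by
  constructor
  · -- contrapositive of: t fails → σ-trace fails
    rintro ⟨k, hQ, hP⟩
    by_contra hn
    push_neg at hn
    -- hn : ∀ i, Q i → ∃ j < i, ¬ P j
    have hQ0 : ¬ Q 0 := fun h0 => by obtain ⟨j, hj, _⟩ := hn 0 h0; omega
    -- the blocker exists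
    have hne : ∃ j, ¬ P j := by
      rcases hn (σ k) hQ with ⟨j, _, hPj⟩
      exact ⟨j, hPj⟩
    have hfail : ¬ ∃ i, Q i ∧ ∀ j, j < i → P j := by
      rintro ⟨i, hQi, hPi⟩
      obtain ⟨j, hj, hPj⟩ := hn i hQi
      exact hPj (hPi j hj)
    have hwit : Nat.find hne ∈ witU P Q := by
      simp [witU, dif_neg hfail, dif_pos hne]
    obtain ⟨k0, hk0N, hk0⟩ := hsub _ hwit
    -- σ k0 is the least non-P position; σ k is a Q position
    obtain ⟨j, hji, hPj⟩ := hn (σ k) hQ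
    have hle : Nat.find hne ≤ j := Nat.find_min' hne hPj
    have hlt : σ k0 < σ k := by rw [hk0]; omega
    have : k0 < k := sigma_reflect σ N hmono hconst hk0N hlt
    have hnp : ¬ P (σ k0) := by rw [hk0]; exact Nat.find_spec hne
    exact hnp (hP k0 this)
  · rintro ⟨i, hQi, hPi⟩
    have hex : ∃ i, Q i ∧ ∀ j, j < i → P j := ⟨i, hQi, hPi⟩
    have hwit : Nat.find hex ∈ witU P Q := by simp [witU, dif_pos hex]
    obtain ⟨k, hkN, hk⟩ := hsub _ hwit
    obtain ⟨hQf, hPf⟩ := Nat.find_spec hex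
    refine ⟨k, by rw [hk]; exact hQf, fun j hj => ?_⟩
    have : σ j < σ k := hmono (by simp; omega) (by simpa using hkN) hj
    exact hPf (σ j) (by omega)

include hmono hconst in
lemma presR (P Q : ℕ → Prop) (hsub : ∀ x ∈ witR P Q, ∃ k ≤ N, σ k = x) :
    (∀ i, Q (σ i) ∨ ∃ j, j < i ∧ P (σ j)) ↔ (∀ i, Q i ∨ ∃ j, j < i ∧ P j) := by
  constructor
  · -- contrapositive: t fails R → σ-trace fails R
    intro hs
    by_contra hn
    push_neg at hn
    -- hn : ∃ i, ¬ Q i ∧ ∀ j < i, ¬ P j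
    have hfail : ∃ i, ¬ Q i ∧ ∀ j, j < i → ¬ P j := by
      obtain ⟨i, hQi, hPi⟩ := hn
      exact ⟨i, hQi, hPi⟩
    have hwit : Nat.find hfail ∈ witR P Q := by simp [witR, dif_pos hfail]
    obtain ⟨k, hkN, hk⟩ := hsub _ hwit
    obtain ⟨hQf, hPf⟩ := Nat.find_spec hfail
    rcases hs k with hQk | ⟨j, hj, hPj⟩
    · rw [hk] at hQk; exact hQf hQk
    · have : σ j < σ k := hmono (by simp; omega) (by simpa using hkN) hj
      rw [hk] at this
      exact hPf (σ j) this hPj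
  · intro ht k
    rcases ht (σ k) with hQk | ⟨j, hj, hPj⟩
    · exact Or.inl hQk
    · -- P somewhere below σ k; least P position is kept
      have hne : ∃ j, P j := ⟨j, hPj⟩
      have hnofail : ¬ ∃ i, ¬ Q i ∧ ∀ j, j < i → ¬ P j := by
        rintro ⟨i, hQi, hPi⟩
        rcases ht i with h | ⟨j', hj', hPj'⟩
        · exact hQi h
        · exact hPi j' hj' hPj'
      have hwit : Nat.find hne ∈ witR P Q := by
        simp [witR, dif_neg hnofail, dif_pos hne]
      obtain ⟨k0, hk0N, hk0⟩ := hsub _ hwit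
      have hle : Nat.find hne ≤ j := Nat.find_min' hne hPj
      have hlt : σ k0 < σ k := by rw [hk0]; omega
      exact Or.inr ⟨k0, sigma_reflect σ N hmono hconst hk0N hlt,
        by rw [hk0]; exact Nat.find_spec hne⟩

end Sigma
def witSet (t : ℕ → ℕ → Prop) : CTL → Finset ℕ
  | .AF ψ => witF (fun i => evalProp (t i) ψ)
  | .EF ψ => witF (fun i => evalProp (t i) ψ)
  | .AG ψ => witG (fun i => evalProp (t i) ψ)
  | .EG ψ => witG (fun i => evalProp (t i) ψ)
  | .AU χ ψ => witU (fun i => evalProp (t i) χ) (fun i => evalProp (t i) ψ)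
  | .EU χ ψ => witU (fun i => evalProp (t i) χ) (fun i => evalProp (t i) ψ)
  | .AR χ ψ => witR (fun i => evalProp (t i) χ) (fun i => evalProp (t i) ψ)
  | .ER χ ψ => witR (fun i => evalProp (t i) χ) (fun i => evalProp (t i) ψ)
  | _ => ∅

lemma witSet_card (t : ℕ → ℕ → Prop) (c : CTL) : (witSet t c).card ≤ 1 := by
  cases c <;>
    simp only [witSet] <;>
    first
      | exact witF_card _
      | exact witG_card _
      | exact witU_card _ _
      | exact witR_card _ _
      | simp

lemma pathHolds_pres (σ : ℕ → ℕ) (N : ℕ) (hσ1 : σ 1 = 1)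
    (hmono : StrictMonoOn σ (Set.Iic N)) (hconst : ∀ k, σ k = σ (min k N))
    (t : ℕ → ℕ → Prop) (c : CTL)
    (hsub : ∀ x ∈ witSet t c, ∃ k ≤ N, σ k = x) :
    (pathHolds (fun k => t (σ k)) c ↔ pathHolds t c) := by
  cases c with
  | AX ψ => show evalProp (t (σ 1)) ψ ↔ evalProp (t 1) ψ; rw [hσ1]
  | EX ψ => show evalProp (t (σ 1)) ψ ↔ evalProp (t 1) ψ; rw [hσ1]
  | AF ψ => exact presF σ N _ hsub
  | EF ψ => exact presF σ N _ hsub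
  | AG ψ => exact presG σ N _ hsub
  | EG ψ => exact presG σ N _ hsub
  | AU χ ψ => exact presU σ N hσ1 hmono hconst _ _ hsub
  | EU χ ψ => exact presU σ N hσ1 hmono hconst _ _ hsub
  | AR χ ψ => exact presR σ N hmono hconst _ _ hsub
  | ER χ ψ => exact presR σ N hmono hconst _ _ hsub
  | atom p => exact Iff.rfl
  | neg φ => exact Iff.rfl
  | and φ ψ => exact Iff.rfl
  | or φ ψ => exact Iff.rfl

lemma build_sigma (S : Finset ℕ) (h0 : 0 ∈ S) (h1 : 1 ∈ S) :
    ∃ (N : ℕ) (σ : ℕ → ℕ), N + 1 = S.card ∧ 1 ≤ N ∧ σ 0 = 0 ∧ σ 1 = 1 ∧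
      StrictMonoOn σ (Set.Iic N) ∧ (∀ k, σ k = σ (min k N)) ∧
      (∀ x ∈ S, ∃ k ≤ N, σ k = x) := by
  have hcard : 1 < S.card := Finset.one_lt_card.mpr ⟨0, h0, 1, h1, by simp⟩
  set n := S.card with hn
  set e := S.orderIsoOfFin rfl with he
  have hidx : ∀ k : ℕ, min k (n-1) < n := by intro k; omega
  set σ : ℕ → ℕ := fun k => (e ⟨min k (n-1), hidx k⟩ : ℕ) with hσ
  have hσ0 : σ 0 = 0 := by
    have h0' : (⟨0, h0⟩ : {x // x ∈ S}) = e (e.symm ⟨0, h0⟩) := (e.apply_symm_apply _).symm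
    have hle : (e ⟨min 0 (n-1), hidx 0⟩ : {x // x ∈ S}) ≤ ⟨0, h0⟩ := by
      rw [h0']
      exact e.monotone (by simp [Fin.le_def])
    simpa [hσ] using Nat.le_zero.mp hle
  have hσ1 : σ 1 = 1 := by
    have hm1 : (⟨min 1 (n-1), hidx 1⟩ : Fin n) = ⟨1, by omega⟩ := Fin.mk_eq_mk.mpr (by omega)
    have h1' : (⟨1, h1⟩ : {x // x ∈ S}) = e (e.symm ⟨1, h1⟩) := (e.apply_symm_apply _).symm
    have hne : (e.symm ⟨1, h1⟩ : Fin n) ≠ ⟨0, by omega⟩ := by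
      intro hcontra
      have h2 : e (e.symm ⟨1, h1⟩) = e ⟨0, by omega⟩ := by rw [hcontra]
      rw [← h1'] at h2
      have h3 : (1 : ℕ) = (e ⟨0, by omega⟩ : ℕ) := congrArg Subtype.val h2
      have h4 : (⟨0, by omega⟩ : Fin n) = ⟨min 0 (n-1), hidx 0⟩ :=
        Fin.mk_eq_mk.mpr (by omega)
      rw [h4] at h3
      have h5 : (e ⟨min 0 (n-1), hidx 0⟩ : ℕ) = 0 := hσ0
      omega
    have hge : (⟨1, by omega⟩ : Fin n) ≤ e.symm ⟨1, h1⟩ := by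
      rw [Fin.le_def]
      have := (e.symm ⟨1, h1⟩).2
      rcases Nat.eq_zero_or_pos (e.symm ⟨1, h1⟩ : ℕ) with hz | hp
      · exact absurd (Fin.ext hz) hne
      · exact hp
    have hle : (e ⟨1, by omega⟩ : {x // x ∈ S}) ≤ ⟨1, h1⟩ := by
      rw [h1']; exact e.monotone hge
    have h1le : (e ⟨1, by omega⟩ : ℕ) ≤ 1 := hle
    have hgt : (e ⟨min 0 (n-1), hidx 0⟩ : {x // x ∈ S}) < e ⟨1, by omega⟩ :=
      e.strictMono (Fin.mk_lt_mk.mpr (by omega))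
    have h0lt : (0:ℕ) < (e ⟨1, by omega⟩ : ℕ) := by
      have hv : (e ⟨min 0 (n-1), hidx 0⟩ : ℕ) < (e ⟨1, by omega⟩ : ℕ) := hgt
      have : (e ⟨min 0 (n-1), hidx 0⟩ : ℕ) = 0 := hσ0
      omega
    have : (e ⟨min 1 (n-1), hidx 1⟩ : ℕ) = (e ⟨1, by omega⟩ : ℕ) := by rw [hm1]
    rw [hσ]
    simp only []
    omega
  refine ⟨n - 1, σ, by omega, by omega, hσ0, hσ1, ?_, ?_, ?_⟩
  · intro a ha b hb hab
    simp only [Set.mem_Iic] at ha hb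
    have : (⟨min a (n-1), hidx a⟩ : Fin n) < ⟨min b (n-1), hidx b⟩ :=
      Fin.mk_lt_mk.mpr (by omega)
    exact e.strictMono this
  · intro k
    have : (⟨min (min k (n-1)) (n-1), hidx _⟩ : Fin n) = ⟨min k (n-1), hidx k⟩ :=
      Fin.mk_eq_mk.mpr (by omega)
    show (e ⟨min k (n-1), hidx k⟩ : ℕ) = (e ⟨min (min k (n-1)) (n-1), hidx _⟩ : ℕ)
    rw [this]
  · intro x hx
    refine ⟨(e.symm ⟨x, hx⟩ : ℕ), by have := (e.symm ⟨x, hx⟩).isLt; omega, ?_⟩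
    have hm : (⟨min (e.symm ⟨x, hx⟩ : ℕ) (n-1), hidx _⟩ : Fin n) = e.symm ⟨x, hx⟩ := by
      apply Fin.ext
      show min (e.symm ⟨x, hx⟩ : ℕ) (n-1) = ((e.symm ⟨x, hx⟩ : Fin n) : ℕ)
      have := (e.symm ⟨x, hx⟩).isLt
      omega
    show (e ⟨min (e.symm ⟨x, hx⟩ : ℕ) (n-1), hidx _⟩ : ℕ) = x
    rw [hm, e.apply_symm_apply]
def witAll (t : ℕ → ℕ → Prop) (D : List CTL) : Finset ℕ :=
  insert 0 (insert 1 (D.foldr (fun c acc => witSet t c ∪ acc) ∅))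

lemma witAll_card (t : ℕ → ℕ → Prop) (D : List CTL) :
    (witAll t D).card ≤ D.length + 2 := by
  have hfold : ∀ D' : List CTL,
      (D'.foldr (fun c acc => witSet t c ∪ acc) ∅).card ≤ D'.length := by
    intro D'
    induction D' with
    | nil => simp
    | cons c D' ih =>
        simp only [List.foldr_cons, List.length_cons]
        calc (witSet t c ∪ D'.foldr (fun c acc => witSet t c ∪ acc) ∅).card
            ≤ (witSet t c).card + (D'.foldr (fun c acc => witSet t c ∪ acc) ∅).card :=
              Finset.card_union_le _ _
          _ ≤ 1 + D'.length := Nat.add_le_add (witSet_card t c) ih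
          _ ≤ D'.length + 1 := by omega
  calc (witAll t D).card ≤ (insert 1 (D.foldr (fun c acc => witSet t c ∪ acc) ∅)).card + 1 :=
        Finset.card_insert_le _ _
    _ ≤ ((D.foldr (fun c acc => witSet t c ∪ acc) ∅).card + 1) + 1 :=
        Nat.add_le_add_right (Finset.card_insert_le _ _) 1
    _ ≤ D.length + 2 := by have := hfold D; omega

lemma witAll_mem0 (t : ℕ → ℕ → Prop) (D : List CTL) : 0 ∈ witAll t D := by
  simp [witAll]

lemma witAll_mem1 (t : ℕ → ℕ → Prop) (D : List CTL) : 1 ∈ witAll t D := by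
  simp [witAll]

lemma witSet_subset_witAll (t : ℕ → ℕ → Prop) (D : List CTL) (c : CTL) (hc : c ∈ D) :
    witSet t c ⊆ witAll t D := by
  have : witSet t c ⊆ D.foldr (fun c acc => witSet t c ∪ acc) ∅ := by
    induction D with
    | nil => simp at hc
    | cons c' D' ih =>
        simp only [List.foldr_cons]
        rcases List.mem_cons.mp hc with h | h
        · subst h; exact Finset.subset_union_left
        · exact (ih h).trans Finset.subset_union_right
  intro x hx
  simp only [witAll, Finset.mem_insert]
  exact Or.inr (Or.inr (this hx))

lemma truncation (t : ℕ → ℕ → Prop) (D : List CTL) :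
    ∃ (N : ℕ) (σ : ℕ → ℕ), 1 ≤ N ∧ N ≤ D.length + 1 ∧ σ 0 = 0 ∧
      (∀ k, σ k = σ (min k N)) ∧
      (∀ c ∈ D, (pathHolds (fun k => t (σ k)) c ↔ pathHolds t c)) := by
  obtain ⟨N, σ, hN1, hge1, hσ0, hσ1, hmono, hconst, hsurj⟩ :=
    build_sigma (witAll t D) (witAll_mem0 t D) (witAll_mem1 t D)
  refine ⟨N, σ, hge1, by have := witAll_card t D; omega, hσ0, hconst, ?_⟩
  intro c hc
  exact pathHolds_pres σ N hσ1 hmono hconst t c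
    (fun x hx => hsurj x (witSet_subset_witAll t D c hc hx))
def MK (m L : ℕ) (s : Fin m → ℕ → ℕ → Prop) : Kripke (Fin m × Fin (L+1)) where
  R := fun a b => (a.2.val = 0 ∧ b.2.val = 1) ∨
    (b.1 = a.1 ∧ (b.2.val = a.2.val + 1 ∨ (a.2.val = L ∧ b.2.val = L)))
  V := fun p a => s a.1 a.2.val p

lemma MK_serial (m L : ℕ) (s : Fin m → ℕ → ℕ → Prop) (hL : 1 ≤ L) :
    Serial (MK m L s).R := by
  rintro ⟨r, i⟩
  by_cases h0 : i.val = 0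
  · exact ⟨(r, ⟨1, by omega⟩), Or.inl ⟨h0, rfl⟩⟩
  · by_cases hL' : i.val = L
    · exact ⟨(r, i), Or.inr ⟨rfl, Or.inr ⟨hL', hL'⟩⟩⟩
    · exact ⟨(r, ⟨i.val + 1, by have := i.isLt; omega⟩), Or.inr ⟨rfl, Or.inl rfl⟩⟩

def MKroot (m L : ℕ) (hm : 0 < m) : Fin m × Fin (L+1) :=
  (⟨0, hm⟩, ⟨0, by omega⟩)

lemma MK_path_char (m L : ℕ) (s : Fin m → ℕ → ℕ → Prop) (hm : 0 < m) (hL : 1 ≤ L)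
    (π : ℕ → Fin m × Fin (L+1)) (hπ : IsPath (MK m L s).R π)
    (h0 : π 0 = MKroot m L hm) :
    ∀ k, 1 ≤ k → π k = ((π 1).1, ⟨min k L, by omega⟩) := by
  intro k hk
  induction k with
  | zero => omega
  | succ k ih =>
      rcases Nat.eq_zero_or_pos k with hk0 | hk1
      · -- k+1 = 1
        subst hk0
        have hedge := hπ 0
        rw [h0] at hedge
        have hval : (π 1).2.val = 1 := by
          rcases hedge with ⟨_, h⟩ | ⟨_, h | ⟨hc, _⟩⟩
          · exact h
          · simpa [MKroot] using h
          · simp [MKroot] at hc; omega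
        refine Prod.ext rfl (Fin.ext ?_)
        simp [hval]; omega
      · have hπk := ih hk1
        have hedge := hπ k
        rw [hπk] at hedge
        rcases hedge with ⟨hc, _⟩ | ⟨hfst, hsnd⟩
        · simp at hc; omega
        · refine Prod.ext (by simpa using hfst) (Fin.ext ?_)
          rcases hsnd with h | ⟨hL', h⟩
          · simp at h ⊢
            have : min k L = k := by
              by_contra hc
              have : k ≥ L := by omega
              have : min k L = L := by omega
              rw [this] at h
              have := (π (k+1)).2.isLt
              omega
            omega
          · simp at hL' h ⊢
            omega

lemma MK_traces (m L : ℕ) (s : Fin m → ℕ → ℕ → Prop) (hm : 0 < m) (hL : 1 ≤ L)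
    (hflat : ∀ r k, s r k = s r (min k L))
    (hv0 : ∀ r r', s r 0 = s r' 0) :
    Traces (MK m L s) (MKroot m L hm) = Set.range s := by
  ext t
  constructor
  · rintro ⟨π, hπ, h0, rfl⟩
    refine ⟨(π 1).1, ?_⟩
    funext k
    rcases Nat.eq_zero_or_pos k with hk0 | hk1
    · subst hk0
      show s (π 1).1 0 = (fun p => (MK m L s).V p (π 0))
      rw [h0]
      show s (π 1).1 0 = fun p => s (⟨0, hm⟩ : Fin m) 0 p
      rw [hv0 (π 1).1 ⟨0, hm⟩]
    · have := MK_path_char m L s hm hL π hπ h0 k hk1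
      show s (π 1).1 k = fun p => (MK m L s).V p (π k)
      rw [this]
      show s (π 1).1 k = s (π 1).1 (min k L)
      exact hflat (π 1).1 k
  · rintro ⟨r, rfl⟩
    refine ⟨fun k => if k = 0 then MKroot m L hm else (r, ⟨min k L, by omega⟩), ?_, by simp, ?_⟩
    · intro k
      rcases Nat.eq_zero_or_pos k with hk0 | hk1
      · subst hk0
        simp only [if_pos rfl, if_neg (by omega : (0:ℕ)+1 ≠ 0)]
        exact Or.inl ⟨rfl, by simp; omega⟩
      · simp only [if_neg (by omega : k ≠ 0), if_neg (by omega : k+1 ≠ 0)]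
        rcases Nat.lt_or_ge k L with hlt | hge
        · refine Or.inr ⟨rfl, Or.inl ?_⟩
          simp; omega
        · refine Or.inr ⟨rfl, Or.inr ?_⟩
          constructor
          · simp; omega
          · simp; omega
    · funext k
      rcases Nat.eq_zero_or_pos k with hk0 | hk1
      · subst hk0
        show s r 0 = (fun p => s (⟨0, hm⟩ : Fin m) 0 p)
        exact hv0 r ⟨0, hm⟩
      · have hif : (if k = 0 then MKroot m L hm else (r, (⟨min k L, by omega⟩ : Fin (L+1))))
            = (r, (⟨min k L, by omega⟩ : Fin (L+1))) := if_neg (by omega)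
        show s r k = (fun p => (MK m L s).V p
          (if k = 0 then MKroot m L hm else (r, (⟨min k L, by omega⟩ : Fin (L+1)))))
        rw [hif]
        show s r k = (fun p => s r (min k L) p)
        exact hflat r k

lemma MK_extent (m L : ℕ) (s : Fin m → ℕ → ℕ → Prop) (hL : 1 ≤ L)
    (π : ℕ → Fin m × Fin (L+1)) (hπ : IsPath (MK m L s).R π) :
    (Set.range π).ncard ≤ L + 2 := by
  have hlvl : ∀ k, 1 ≤ k → (π k).2.val ≠ 0 := by
    intro k hk
    have hedge := hπ (k-1)
    have hk' : k - 1 + 1 = k := by omega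
    rw [hk'] at hedge
    rcases hedge with ⟨_, h⟩ | ⟨_, h | ⟨_, h⟩⟩ <;> omega
  have hfst : ∀ k, 1 ≤ k → (π k).1 = (π 1).1 := by
    intro k hk
    induction k with
    | zero => omega
    | succ k ih =>
        rcases Nat.eq_zero_or_pos k with hk0 | hk1
        · subst hk0; rfl
        · have hedge := hπ k
          rcases hedge with ⟨hc, _⟩ | ⟨hfsteq, _⟩
          · exact absurd hc (hlvl k hk1)
          · rw [hfsteq]; exact ih hk1
  have hsub : Set.range π ⊆
      insert (π 0) (Set.range (fun j : Fin (L+1) => ((π 1).1, j))) := by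
    rintro x ⟨k, rfl⟩
    rcases Nat.eq_zero_or_pos k with hk0 | hk1
    · subst hk0; exact Set.mem_insert _ _
    · refine Set.mem_insert_of_mem _ ⟨(π k).2, ?_⟩
      show ((π 1).1, (π k).2) = π k
      exact Prod.ext (hfst k hk1).symm rfl
  calc (Set.range π).ncard
      ≤ (insert (π 0) (Set.range (fun j : Fin (L+1) => ((π 1).1, j)))).ncard :=
        Set.ncard_le_ncard hsub (Set.toFinite _)
    _ ≤ (Set.range (fun j : Fin (L+1) => ((π 1).1, j))).ncard + 1 :=
        Set.ncard_insert_le _ _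
    _ ≤ (L + 1) + 1 := by
        have : (Set.range (fun j : Fin (L+1) => ((π 1).1, j))).ncard ≤ L + 1 := by
          rw [← Set.image_univ]
          calc (Set.univ.image (fun j : Fin (L+1) => ((π 1).1, j))).ncard
              ≤ (Set.univ : Set (Fin (L+1))).ncard := Set.ncard_image_le Set.finite_univ
            _ = L + 1 := by rw [Set.ncard_univ]; simp
        omega
    _ = L + 2 := by omega
theorem flat_CTL_quadratic_model_upper_bound' :
    ∃ C : ℕ, 0 < C ∧ ∀ φ : CTL, φ.td ≤ 1 →
      (∃ (W : Type) (K : Kripke W) (w : W), Serial K.R ∧ sat K φ w) →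
      ∃ (W : Type) (inst : Fintype W) (K : Kripke W) (w : W),
        Serial K.R ∧ sat K φ w ∧
        @Fintype.card W inst ≤ C * φ.len ^ 2 ∧
        (∀ π : ℕ → W, IsPath K.R π → (Set.range π).ncard ≤ C * φ.len + 1) := by
  classical
  refine ⟨9, by norm_num, ?_⟩
  rintro φ htd ⟨W, K, w0, hser, hsat⟩
  have hlen := one_le_len φ
  have hDlen : (tops φ).length ≤ φ.len := tops_length_le φ
  set v0 : ℕ → Prop := fun p => K.V p w0 with hv0def
  set T : Set (ℕ → ℕ → Prop) := Traces K w0 with hTdef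
  set D : List CTL := tops φ with hDdef
  -- a default path
  have hpath : ∃ π : ℕ → W, IsPath K.R π ∧ π 0 = w0 := by
    choose f hf using hser
    refine ⟨fun k => f^[k] w0, ?_, rfl⟩
    intro i
    show K.R (f^[i] w0) (f^[i+1] w0)
    rw [Function.iterate_succ_apply']
    exact hf _
  obtain ⟨π0, hπ0, hπ00⟩ := hpath
  have htdefT : trOf K π0 ∈ T := ⟨π0, hπ0, hπ00, rfl⟩
  set tdef : ℕ → ℕ → Prop := trOf K π0 with htdefdef
  have hroot : rootSat v0 T φ := (sat_iff_rootSat K w0 φ htd).1 hsat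
  -- truncation data
  choose Nf σf hN1 hNle hσ0 hconst hpres using fun t => truncation t D
  set L : ℕ := D.length + 1 with hLdef
  have hL1 : 1 ≤ L := by omega
  have hNleL : ∀ t, Nf t ≤ L := fun t => by have := hNle t; omega
  -- dedicated witnesses
  set wt : CTL → (ℕ → ℕ → Prop) :=
    fun c => if h : ∃ t ∈ T, pathHolds t c then h.choose else tdef with hwt
  set wf : CTL → (ℕ → ℕ → Prop) :=
    fun c => if h : ∃ t ∈ T, ¬ pathHolds t c then h.choose else tdef with hwf
  set bases : List (ℕ → ℕ → Prop) := tdef :: (D.flatMap fun c => [wt c, wf c]) with hbases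
  have hbT : ∀ t ∈ bases, t ∈ T := by
    intro t ht
    rcases List.mem_cons.mp ht with h | h
    · subst h; exact htdefT
    · obtain ⟨c, _, hmem⟩ := List.mem_flatMap.mp h
      have : t = wt c ∨ t = wf c := by simpa using hmem
      rcases this with rfl | rfl
      · by_cases hex : ∃ t ∈ T, pathHolds t c
        · simp only [hwt, dif_pos hex]; exact hex.choose_spec.1
        · simp only [hwt, dif_neg hex]; exact htdefT
      · by_cases hex : ∃ t ∈ T, ¬ pathHolds t c
        · simp only [hwf, dif_pos hex]; exact hex.choose_spec.1
        · simp only [hwf, dif_neg hex]; exact htdefT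
  set m : ℕ := bases.length with hmdef
  have hm : 0 < m := by simp [hmdef, hbases]
  set s : Fin m → ℕ → ℕ → Prop := fun r k => (bases.get r) (σf (bases.get r) k) with hs
  have hflat : ∀ r k, s r k = s r (min k L) := by
    intro r k
    show (bases.get r) (σf (bases.get r) k) = (bases.get r) (σf (bases.get r) (min k L))
    rw [hconst (bases.get r) k, hconst (bases.get r) (min k L)]
    have hh := hNleL (bases.get r)
    have : min k (Nf (bases.get r)) = min (min k L) (Nf (bases.get r)) := by omega
    rw [this]
  have hbase0 : ∀ t ∈ bases, t 0 = v0 := by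
    intro t ht
    obtain ⟨π, _, h00, rfl⟩ := hbT t ht
    show (fun p => K.V p (π 0)) = v0
    rw [h00]
  have hv0s : ∀ r r', s r 0 = s r' 0 := by
    intro r r'
    show (bases.get r) (σf (bases.get r) 0) = (bases.get r') (σf (bases.get r') 0)
    rw [hσ0 (bases.get r), hσ0 (bases.get r'),
      hbase0 (bases.get r) (List.get_mem bases r),
      hbase0 (bases.get r') (List.get_mem bases r')]
  have hTr : Traces (MK m L s) (MKroot m L hm) = Set.range s :=
    MK_traces m L s hm hL1 hflat hv0s
  -- the transfer of truth
  have hE : ∀ c ∈ tops φ,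
      ((∃ t ∈ T, pathHolds t c) ↔
        (∃ t ∈ Traces (MK m L s) (MKroot m L hm), pathHolds t c)) := by
    intro c hc
    rw [hTr]
    constructor
    · intro hex
      have hwtb : wt c ∈ bases := by
        refine List.mem_cons.mpr (Or.inr (List.mem_flatMap.mpr ⟨c, ?_, by simp⟩))
        exact hc
      have hwth : pathHolds (wt c) c := by
        simp only [hwt, dif_pos hex]
        exact hex.choose_spec.2
      obtain ⟨r, hr⟩ := List.mem_iff_get.mp hwtb
      refine ⟨s r, ⟨r, rfl⟩, ?_⟩
      show pathHolds (fun k => (bases.get r) (σf (bases.get r) k)) c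
      rw [hr]
      exact (hpres (wt c) c hc).2 hwth
    · rintro ⟨t', ⟨r, rfl⟩, hph⟩
      refine ⟨bases.get r, hbT _ (List.get_mem bases r), ?_⟩
      exact (hpres (bases.get r) c hc).1 hph
  have hA : ∀ c ∈ tops φ,
      ((∀ t ∈ T, pathHolds t c) ↔
        (∀ t ∈ Traces (MK m L s) (MKroot m L hm), pathHolds t c)) := by
    intro c hc
    rw [hTr]
    constructor
    · intro hall t' ht'
      obtain ⟨r, rfl⟩ := ht'
      exact (hpres (bases.get r) c hc).2 (hall _ (hbT _ (List.get_mem bases r)))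
    · intro hall
      by_contra hn
      push_neg at hn
      obtain ⟨t, htT, hph⟩ := hn
      have hex : ∃ t ∈ T, ¬ pathHolds t c := ⟨t, htT, hph⟩
      have hwfb : wf c ∈ bases := by
        refine List.mem_cons.mpr (Or.inr (List.mem_flatMap.mpr ⟨c, ?_, by simp⟩))
        exact hc
      have hwfh : ¬ pathHolds (wf c) c := by
        simp only [hwf, dif_pos hex]
        exact hex.choose_spec.2
      obtain ⟨r, hr⟩ := List.mem_iff_get.mp hwfb
      have := hall (s r) ⟨r, rfl⟩
      have h2 : pathHolds (fun k => (bases.get r) (σf (bases.get r) k)) c := this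
      rw [hr] at h2
      exact hwfh ((hpres (wf c) c hc).1 h2)
  have hroot' : rootSat v0 (Traces (MK m L s) (MKroot m L hm)) φ :=
    (rootSat_iff v0 T _ φ hE hA).1 hroot
  have hval : (fun p => (MK m L s).V p (MKroot m L hm)) = v0 := by
    show (fun p => s ⟨0, hm⟩ 0 p) = v0
    have h1 : s ⟨0, hm⟩ 0 = v0 := by
      show (bases.get ⟨0, hm⟩) (σf (bases.get ⟨0, hm⟩) 0) = v0
      rw [hσ0, hbase0 (bases.get ⟨0, hm⟩) (List.get_mem bases ⟨0, hm⟩)]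
    exact h1
  have hsat' : sat (MK m L s) φ (MKroot m L hm) := by
    refine (sat_iff_rootSat (MK m L s) (MKroot m L hm) φ htd).2 ?_
    rw [hval]
    exact hroot'
  -- counting
  have hmval : m = 2 * D.length + 1 := by
    have haux : ∀ l : List CTL, (l.flatMap fun c => [wt c, wf c]).length = 2 * l.length := by
      intro l
      induction l with
      | nil => simp
      | cons c l ih => simp [ih]; omega
    simp [hmdef, hbases, haux]
  refine ⟨Fin m × Fin (L+1), inferInstance, MK m L s, MKroot m L hm,
    MK_serial m L s hL1, hsat', ?_, ?_⟩
  · have hcard : Fintype.card (Fin m × Fin (L+1)) = m * (L+1) := by simp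
    rw [hcard]
    have hd := hDlen
    have h1 := hlen
    rw [hmval, hLdef]
    nlinarith [sq_nonneg φ.len]
  · intro π hπ
    have h1 := MK_extent m L s hL1 π hπ
    have : L + 2 ≤ 9 * φ.len + 1 := by
      rw [hLdef]
      omega
    omega
end
end FlatCTL

/-- Every satisfiable flat CTL formula `φ` (temporal depth at most 1, arbitrary CTL
operators, standard Boolean base) has a serial model of size `O(|φ|²)` and extent
`O(|φ|)` (every path visits at most `O(|φ|) + 1` distinct worlds). -/
theorem flat_CTL_quadratic_model_upper_bound :
    ∃ C : ℕ, 0 < C ∧ ∀ φ : CTL, φ.td ≤ 1 →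
      (∃ (W : Type) (K : Kripke W) (w : W), Serial K.R ∧ sat K φ w) →
      ∃ (W : Type) (inst : Fintype W) (K : Kripke W) (w : W),
        Serial K.R ∧ sat K φ w ∧
        @Fintype.card W inst ≤ C * φ.len ^ 2 ∧
        (∀ π : ℕ → W, IsPath K.R π → (Set.range π).ncard ≤ C * φ.len + 1) := by
  exact flat_CTL_quadratic_model_upper_bound'
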